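/- Let K be a simplicial complex whose vertex set is partitioned into V_0,…,V_m, let F be a field, and let v be a vertex that is an isolated point within its own colour class (i.e., no edge of K joins v to another vertex of the same colour). If H̃_{|S|-2}(K_S, F) = 0 for every nonempty S ⊆ {0,…,m}, then there exists a rainbow simplex of K containing v. -/

import Mathlib

open Finset

/-- The faces of an abstract simplicial complex: a set of nonempty finite sets of
vertices, closed under taking nonempty subsets. -/
def IsComplex {V : Type*} (S : Set (Finset V)) : Prop :=
  (∀ s ∈ S, s.Nonempty) ∧ ∀ s ∈ S, ∀ t ⊆ s, t.Nonempty → t ∈ S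

/-- The nerve of a collection `Γ` of (sub)complexes, as a set of finsets of the index
type: the simplices are the nonempty subcollections with a common face. -/
def nerveC {ι V : Type*} (Γ : ι → Set (Finset V)) : Set (Finset ι) :=
  {σ | σ.Nonempty ∧ (⋂ i ∈ (σ : Finset ι), Γ i).Nonempty}

/-- Simplicial `n`-chains (dimension `n`, i.e. on vertex sets of cardinality `n+1`)
on the vertex type `V`, with coefficients in `A`. -/
abbrev Chains (A V : Type*) [AddCommGroup A] [LinearOrder V] (n : ℕ) : Type _ :=
  {s : Finset V // s.card = n + 1} →₀ A

variable (R : Type*) [CommRing R] (A : Type*) [AddCommGroup A] [Module R A]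
variable (V : Type*) [LinearOrder V]

/-- The simplicial boundary map, with the usual alternating signs determined by the
linear order on the vertices. -/
noncomputable def bdry (n : ℕ) : Chains A V (n + 1) →ₗ[R] Chains A V n :=
  Finsupp.lsum R fun s =>
    ∑ v ∈ (s : Finset V).attach,
      ((-1 : ℤ) ^ (((s : Finset V).filter (fun w => w < v.1)).card)) •
        (Finsupp.lsingle (R := R) ⟨(s : Finset V).erase v.1, by
          rw [Finset.card_erase_of_mem v.2, s.2]; rfl⟩)

/-- The augmentation map on `0`-chains. -/
noncomputable def aug : Chains A V 0 →ₗ[R] A :=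
  Finsupp.lsum R fun _ => LinearMap.id

/-- Reduced cycles: kernel of the boundary map, resp. of the augmentation in degree 0. -/
noncomputable def cycles : (n : ℕ) → Submodule R (Chains A V n)
  | 0 => LinearMap.ker (aug R A V)
  | (n + 1) => LinearMap.ker (bdry R A V n)

/-- Chains supported on the simplices belonging to `S`. -/
def chainsIn (S : Set (Finset V)) (n : ℕ) : Submodule R (Chains A V n) :=
  Finsupp.supported A R {s : {s : Finset V // s.card = n + 1} | ↑s ∈ S}

/-- Reduced cycles of the complex `S`. -/
noncomputable def cyclesIn (S : Set (Finset V)) (n : ℕ) : Submodule R (Chains A V n) :=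
  cycles R A V n ⊓ chainsIn R A V S n

/-- Boundaries of chains of the complex `S`. -/
noncomputable def boundariesIn (S : Set (Finset V)) (n : ℕ) : Submodule R (Chains A V n) :=
  Submodule.map (bdry R A V n) (chainsIn R A V S (n + 1))

/-- Reduced simplicial homology of the complex `S` in degree `n ≥ 0`,
with coefficients in the `R`-module `A`. -/
noncomputable abbrev redH (S : Set (Finset V)) (n : ℕ) : Type _ :=
  (cyclesIn R A V S n) ⧸
    (Submodule.comap (cyclesIn R A V S n).subtype (boundariesIn R A V S n))

/-- Vanishing of the reduced homology of `S` in degree `n : ℤ`, with the convention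
that `H̃₋₁(S) = 0` iff `S` is nonempty (and trivial vanishing below degree `-1`). -/
def RedHVanish (S : Set (Finset V)) (n : ℤ) : Prop :=
  if n < -1 then True
  else if n = -1 then S.Nonempty
  else Subsingleton (redH R A V S n.toNat)

open scoped Classical in
/-- The dimension (rank) of the reduced homology of `S` in degree `n : ℤ`; in degree `-1`
it is `0` iff `S` is nonempty, in accordance with the convention. -/
noncomputable def redHRank (S : Set (Finset V)) (n : ℤ) : Cardinal :=
  if n < -1 then 0
  else if n = -1 then (if S.Nonempty then (0 : Cardinal) else 1)
  else Module.rank R (redH R A V S n.toNat)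




namespace SpernerAux
section Sec1


/-! ### Sign combinatorics -/

lemma neg_one_pow_eq_neg_of {x y : ℕ} (h : (x + y) % 2 = 1) : (-1 : ℤ) ^ x = -(-1 : ℤ) ^ y := by
  have h1 : (-1 : ℤ) ^ x * (-1 : ℤ) ^ y = -1 := by
    rw [← pow_add]; exact (Nat.odd_iff.mpr h).neg_one_pow
  have h2 : (-1 : ℤ) ^ y * (-1 : ℤ) ^ y = 1 := by
    rw [← pow_add]; exact Even.neg_one_pow ⟨y, rfl⟩
  calc (-1 : ℤ) ^ x = (-1 : ℤ) ^ x * ((-1 : ℤ) ^ y * (-1 : ℤ) ^ y) := by rw [h2, mul_one]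
    _ = ((-1 : ℤ) ^ x * (-1 : ℤ) ^ y) * (-1 : ℤ) ^ y := by ring
    _ = -(-1 : ℤ) ^ y := by rw [h1]; ring

lemma neg_one_pow_eq_of {x y : ℕ} (h : (x + y) % 2 = 0) : (-1 : ℤ) ^ x = (-1 : ℤ) ^ y := by
  have h1 : (-1 : ℤ) ^ x * (-1 : ℤ) ^ y = 1 := by
    rw [← pow_add]; exact Even.neg_one_pow (Nat.even_iff.mpr h)
  have h2 : (-1 : ℤ) ^ y * (-1 : ℤ) ^ y = 1 := by
    rw [← pow_add]; exact Even.neg_one_pow ⟨y, rfl⟩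
  calc (-1 : ℤ) ^ x = (-1 : ℤ) ^ x * ((-1 : ℤ) ^ y * (-1 : ℤ) ^ y) := by rw [h2, mul_one]
    _ = ((-1 : ℤ) ^ x * (-1 : ℤ) ^ y) * (-1 : ℤ) ^ y := by ring
    _ = (-1 : ℤ) ^ y := by rw [h1]; ring

variable {α : Type*} [LinearOrder α]

/-- The sign `(-1)^{#{x ∈ s | x < a}}`. -/
def esgn (s : Finset α) (a : α) : ℤ := (-1) ^ ((s.filter (fun w => w < a)).card)

lemma filter_erase_card (s : Finset α) (a w : α) (ha : a ∈ s) :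
    ((s.erase a).filter (fun x => x < w)).card + (if a < w then 1 else 0)
      = (s.filter (fun x => x < w)).card := by
  rw [Finset.filter_erase]
  by_cases h : a < w
  · have hmem : a ∈ s.filter (fun x => x < w) := Finset.mem_filter.2 ⟨ha, h⟩
    rw [if_pos h, Finset.card_erase_of_mem hmem]
    have : 0 < (s.filter (fun x => x < w)).card := Finset.card_pos.2 ⟨a, hmem⟩
    omega
  · rw [if_neg h, Finset.erase_eq_of_notMem, add_zero]
    intro hmem
    exact h (Finset.mem_filter.1 hmem).2

lemma esgn_comm {s : Finset α} {a b : α} (ha : a ∈ s) (hb : b ∈ s) (hab : a ≠ b) :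
    esgn s a * esgn (s.erase a) b = -(esgn s b * esgn (s.erase b) a) := by
  unfold esgn
  rw [← pow_add, ← pow_add]
  have h1 := filter_erase_card s a b ha
  have h2 := filter_erase_card s b a hb
  have hor : a < b ∨ b < a := hab.lt_or_gt
  apply neg_one_pow_eq_neg_of
  rcases hor with h | h
  · rw [if_pos h] at h1
    rw [if_neg (not_lt.2 h.le)] at h2
    omega
  · rw [if_neg (not_lt.2 h.le)] at h1
    rw [if_pos h] at h2
    omega


end Sec1
section Sec3

variable {V : Type*} [LinearOrder V]

lemma filter_erase_of_not (s : Finset V) (a : V) (P : V → Prop) [DecidablePred P]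
    (h : ¬ P a) : (s.erase a).filter P = s.filter P := by
  rw [Finset.filter_erase, Finset.erase_eq_of_notMem]
  intro hmem
  exact h (Finset.mem_filter.1 hmem).2

lemma card_filter_trichotomy {β : Type*} [LinearOrder β] (s : Finset V) (P : V → Prop)
    [DecidablePred P] (f : V → β) (j : β) :
    (s.filter fun x => P x).card
      = (s.filter fun x => P x ∧ f x < j).card + (s.filter fun x => P x ∧ f x = j).card
        + (s.filter fun x => P x ∧ j < f x).card := by
  have h1 : s.filter (fun x => P x)
      = (s.filter fun x => P x ∧ f x < j) ∪ ((s.filter fun x => P x ∧ f x = j)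
        ∪ (s.filter fun x => P x ∧ j < f x)) := by
    ext x
    simp only [Finset.mem_filter, Finset.mem_union]
    constructor
    · rintro ⟨hx, hp⟩
      rcases lt_trichotomy (f x) j with hc | hc | hc
      · exact Or.inl ⟨hx, hp, hc⟩
      · exact Or.inr (Or.inl ⟨hx, hp, hc⟩)
      · exact Or.inr (Or.inr ⟨hx, hp, hc⟩)
    · rintro (⟨hx, hp, _⟩ | ⟨hx, hp, _⟩ | ⟨hx, hp, _⟩) <;> exact ⟨hx, hp⟩
  have d23 : Disjoint (s.filter fun x => P x ∧ f x = j) (s.filter fun x => P x ∧ j < f x) := by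
    rw [Finset.disjoint_left]
    intro x hx hy
    have h2 := (Finset.mem_filter.1 hx).2.2
    have h3 := (Finset.mem_filter.1 hy).2.2
    rw [h2] at h3
    exact lt_irrefl j h3
  have d123 : Disjoint (s.filter fun x => P x ∧ f x < j)
      ((s.filter fun x => P x ∧ f x = j) ∪ (s.filter fun x => P x ∧ j < f x)) := by
    rw [Finset.disjoint_left]
    intro x hx hy
    have h2 := (Finset.mem_filter.1 hx).2.2
    rcases Finset.mem_union.1 hy with hy | hy
    · have h3 := (Finset.mem_filter.1 hy).2.2
      rw [h3] at h2
      exact lt_irrefl j h2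
    · have h3 := (Finset.mem_filter.1 hy).2.2
      exact lt_asymm h2 h3
  rw [h1, Finset.card_union_of_disjoint d123, Finset.card_union_of_disjoint d23]
  ring

lemma card_filter_eq_pred (s : Finset V) (a : V) (P : V → Prop) [DecidablePred P] :
    (s.filter fun x => P x ∧ x = a).card = if a ∈ s ∧ P a then 1 else 0 := by
  by_cases h : a ∈ s ∧ P a
  · rw [if_pos h]
    have : s.filter (fun x => P x ∧ x = a) = {a} := by
      ext x
      simp only [Finset.mem_filter, Finset.mem_singleton]
      constructor
      · rintro ⟨_, _, rfl⟩; rfl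
      · rintro rfl; exact ⟨h.1, h.2, rfl⟩
    rw [this, Finset.card_singleton]
  · rw [if_neg h, Finset.card_eq_zero, Finset.filter_eq_empty_iff]
    rintro x hx ⟨hp, rfl⟩
    exact h ⟨hx, hp⟩

/-- Split a `< b`-filter at an intermediate point `a < b`. -/
lemma card_filter_lt_split (s : Finset V) {a b : V} (hab : a < b) (Q : V → Prop)
    [DecidablePred Q] :
    (s.filter fun x => x < b ∧ Q x).card
      = (s.filter fun x => x < a ∧ Q x).card + (if a ∈ s ∧ Q a then 1 else 0)
        + (s.filter fun x => (a < x ∧ x < b) ∧ Q x).card := by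
  have h := card_filter_trichotomy s (fun x => x < b ∧ Q x) id a
  simp only [id] at h
  have e1 : s.filter (fun x => (x < b ∧ Q x) ∧ x < a) = s.filter (fun x => x < a ∧ Q x) := by
    ext x
    simp only [Finset.mem_filter]
    constructor
    · rintro ⟨hs, ⟨_, h2⟩, h3⟩; exact ⟨hs, h3, h2⟩
    · rintro ⟨hs, h3, h2⟩; exact ⟨hs, ⟨lt_trans h3 hab, h2⟩, h3⟩
  have e2 : s.filter (fun x => (x < b ∧ Q x) ∧ x = a) = s.filter (fun x => Q x ∧ x = a) := by
    ext x
    simp only [Finset.mem_filter]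
    constructor
    · rintro ⟨hs, ⟨_, h2⟩, rfl⟩; exact ⟨hs, h2, rfl⟩
    · rintro ⟨hs, h2, rfl⟩; exact ⟨hs, ⟨hab, h2⟩, rfl⟩
  have e3 : s.filter (fun x => (x < b ∧ Q x) ∧ a < x)
      = s.filter (fun x => (a < x ∧ x < b) ∧ Q x) := by
    ext x
    simp only [Finset.mem_filter]
    constructor
    · rintro ⟨hs, ⟨h1, h2⟩, h3⟩; exact ⟨hs, ⟨h3, h1⟩, h2⟩
    · rintro ⟨hs, ⟨h3, h1⟩, h2⟩; exact ⟨hs, ⟨h1, h2⟩, h3⟩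
  rw [e1, e2, e3, card_filter_eq_pred] at h
  exact h

/-- Split a `a <`-filter at an intermediate point `a < b`. -/
lemma card_filter_gt_split (s : Finset V) {a b : V} (hab : a < b) (Q : V → Prop)
    [DecidablePred Q] :
    (s.filter fun x => a < x ∧ Q x).card
      = (s.filter fun x => (a < x ∧ x < b) ∧ Q x).card + (if b ∈ s ∧ Q b then 1 else 0)
        + (s.filter fun x => b < x ∧ Q x).card := by
  have h := card_filter_trichotomy s (fun x => a < x ∧ Q x) id b
  simp only [id] at h
  have e1 : s.filter (fun x => (a < x ∧ Q x) ∧ x < b)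
      = s.filter (fun x => (a < x ∧ x < b) ∧ Q x) := by
    ext x
    simp only [Finset.mem_filter]
    constructor
    · rintro ⟨hs, ⟨h1, h2⟩, h3⟩; exact ⟨hs, ⟨h1, h3⟩, h2⟩
    · rintro ⟨hs, ⟨h1, h3⟩, h2⟩; exact ⟨hs, ⟨h1, h2⟩, h3⟩
  have e2 : s.filter (fun x => (a < x ∧ Q x) ∧ x = b) = s.filter (fun x => Q x ∧ x = b) := by
    ext x
    simp only [Finset.mem_filter]
    constructor
    · rintro ⟨hs, ⟨_, h2⟩, rfl⟩; exact ⟨hs, h2, rfl⟩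
    · rintro ⟨hs, h2, rfl⟩; exact ⟨hs, ⟨hab, h2⟩, rfl⟩
  have e3 : s.filter (fun x => (a < x ∧ Q x) ∧ b < x) = s.filter (fun x => b < x ∧ Q x) := by
    ext x
    simp only [Finset.mem_filter]
    constructor
    · rintro ⟨hs, ⟨_, h2⟩, h3⟩; exact ⟨hs, h3, h2⟩
    · rintro ⟨hs, h3, h2⟩; exact ⟨hs, ⟨lt_trans hab h3, h2⟩, h3⟩
  rw [e1, e2, e3, card_filter_eq_pred] at h
  exact h


end Sec3
section Sec4

variable {V : Type*} [LinearOrder V]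

variable {ι : Type*} [LinearOrder ι]

/-- Number of colour-inversions of `s`. -/
def invc (c : V → ι) (s : Finset V) : ℕ :=
  ∑ x ∈ s, (s.filter fun y => x < y ∧ c y < c x).card

lemma invc_erase (c : V → ι) {σ : Finset V} {a : V} (ha : a ∈ σ) :
    invc c σ = invc c (σ.erase a)
      + ((σ.erase a).filter fun x => x < a ∧ c a < c x).card
      + ((σ.erase a).filter fun x => a < x ∧ c x < c a).card := by
  have hna : a ∉ σ.erase a := Finset.notMem_erase a σ
  have hins : insert a (σ.erase a) = σ := Finset.insert_erase ha
  unfold invc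
  conv_lhs => rw [← hins]
  rw [Finset.sum_insert hna]
  have h1 : ((insert a (σ.erase a)).filter fun y => a < y ∧ c y < c a).card
      = ((σ.erase a).filter fun y => a < y ∧ c y < c a).card := by
    rw [Finset.filter_insert, if_neg (by simp)]
  have h2 : ∀ x ∈ σ.erase a,
      ((insert a (σ.erase a)).filter fun y => x < y ∧ c y < c x).card
      = ((σ.erase a).filter fun y => x < y ∧ c y < c x).card
        + (if x < a ∧ c a < c x then 1 else 0) := by
    intro x hx
    rw [Finset.filter_insert]
    split_ifs with hcnd
    · rw [Finset.card_insert_of_notMem (fun hh => hna (Finset.filter_subset _ _ hh))]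
    · omega
  rw [Finset.sum_congr rfl h2, Finset.sum_add_distrib, Finset.sum_boole, h1]
  push_cast
  omega

lemma image_erase_of_injOn (c : V → ι) {σ : Finset V} {u : V}
    (hinj : Set.InjOn c ↑σ) (hu : u ∈ σ) :
    (σ.erase u).image c = (σ.image c).erase (c u) := by
  ext i
  simp only [Finset.mem_image, Finset.mem_erase]
  constructor
  · rintro ⟨y, ⟨hyu, hyσ⟩, rfl⟩
    exact ⟨fun hcy => hyu (hinj hyσ hu hcy), y, hyσ, rfl⟩
  · rintro ⟨hne, y, hyσ, rfl⟩
    exact ⟨y, ⟨fun hh => hne (by rw [hh]), hyσ⟩, rfl⟩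

lemma image_erase_of_pair (c : V → ι) {σ : Finset V} {a b : V} (hab : c b = c a)
    (hb : b ∈ σ.erase a) : (σ.erase a).image c = σ.image c := by
  apply Finset.Subset.antisymm
  · exact Finset.image_subset_image (Finset.erase_subset _ _)
  · intro i hi
    rcases Finset.mem_image.1 hi with ⟨y, hy, rfl⟩
    by_cases hya : y = a
    · exact Finset.mem_image.2 ⟨b, hb, by rw [hab, hya]⟩
    · exact Finset.mem_image.2 ⟨y, Finset.mem_erase.2 ⟨hya, hy⟩, rfl⟩

/-- Case 1 sign identity: removing the unique vertex of colour `c a`. -/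
lemma case1_sign (c : V → ι) {σ : Finset V} {a : V} (ha : a ∈ σ)
    (hinj : Set.InjOn c ↑σ) :
    esgn σ a * (-1 : ℤ) ^ (invc c (σ.erase a))
      = (-1 : ℤ) ^ (((σ.image c).filter fun j => j < c a).card)
        * (-1 : ℤ) ^ (invc c σ) := by
  -- notation
  have hq : ((σ.image c).filter fun j => j < c a).card
      = (σ.filter fun x => c x < c a).card := by
    rw [Finset.filter_image]
    exact Finset.card_image_of_injOn (hinj.mono (Finset.filter_subset _ _))
  -- split p_a
  have hpa := card_filter_trichotomy σ (fun x => x < a) c (c a)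
  have hpa0 : (σ.filter fun x => (x < a) ∧ c x = c a).card = 0 := by
    rw [Finset.card_eq_zero, Finset.filter_eq_empty_iff]
    rintro x hx ⟨hlt, hcx⟩
    exact absurd (hinj hx ha hcx) (ne_of_lt hlt)
  -- split #(cx < ca)
  have hqq := card_filter_trichotomy σ (fun x => c x < c a) id a
  simp only [id] at hqq
  have hqq0 : (σ.filter fun x => (c x < c a) ∧ x = a).card = 0 := by
    rw [Finset.card_eq_zero, Finset.filter_eq_empty_iff]
    rintro x hx ⟨hlt, rfl⟩
    exact lt_irrefl _ hlt
  -- convert shapes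
  have e1 : σ.filter (fun x => (c x < c a) ∧ x < a) = σ.filter (fun x => (x < a) ∧ c x < c a) := by
    ext x; simp only [Finset.mem_filter, and_comm]
  have e2 : σ.filter (fun x => (c x < c a) ∧ a < x) = σ.filter (fun x => (a < x) ∧ c x < c a) := by
    ext x; simp only [Finset.mem_filter, and_comm]
  rw [e1, e2] at hqq
  -- inversion decomposition
  have hinv := invc_erase c ha
  rw [filter_erase_of_not σ a _ (by simp), filter_erase_of_not σ a _ (by simp)] at hinv
  -- now pure arithmetic
  show (-1:ℤ) ^ ((σ.filter fun w => w < a).card) * _ = _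
  rw [← pow_add, ← pow_add]
  apply neg_one_pow_eq_of
  omega

/-- Case 2 sign cancellation: two vertices of the same colour. -/
lemma case2_sign (c : V → ι) {σ : Finset V} {a b : V} (haσ : a ∈ σ) (hbσ : b ∈ σ)
    (hab : a < b) (hc : c a = c b) (hinj : Set.InjOn c ↑(σ.erase a)) :
    esgn σ a * (-1 : ℤ) ^ (invc c (σ.erase a))
      + esgn σ b * (-1 : ℤ) ^ (invc c (σ.erase b)) = 0 := by
  have hba : b ∈ σ.erase a := Finset.mem_erase.2 ⟨ne_of_gt hab, hbσ⟩
  -- F1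
  have hF1 := invc_erase c haσ
  rw [filter_erase_of_not σ a _ (by simp), filter_erase_of_not σ a _ (by simp)] at hF1
  -- F2
  have hF2 := invc_erase c hbσ
  rw [filter_erase_of_not σ b _ (by simp), filter_erase_of_not σ b _ (by simp)] at hF2
  rw [← hc] at hF2
  -- F3 : pb = pa + 1 + t
  have hF3 := card_filter_trichotomy σ (fun x => x < b) id a
  simp only [id] at hF3
  have hF3a : σ.filter (fun x => (x < b) ∧ x < a) = σ.filter (fun x => x < a) := by
    ext x; simp only [Finset.mem_filter]
    exact ⟨fun ⟨h1, _, h3⟩ => ⟨h1, h3⟩, fun ⟨h1, h3⟩ => ⟨h1, lt_trans h3 hab, h3⟩⟩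
  have hF3b : (σ.filter fun x => (x < b) ∧ x = a).card = 1 := by
    rw [card_filter_eq_pred σ a (fun x => x < b), if_pos ⟨haσ, hab⟩]
  have hF3c : σ.filter (fun x => (x < b) ∧ a < x) = σ.filter (fun x => a < x ∧ x < b) := by
    ext x; simp only [Finset.mem_filter, and_comm]
  rw [hF3a, hF3b, hF3c] at hF3
  -- F4 : A_b = A_a + t₁
  have hF4 := card_filter_trichotomy σ (fun x => x < b ∧ c a < c x) id a
  simp only [id] at hF4
  have hF4a : σ.filter (fun x => (x < b ∧ c a < c x) ∧ x < a)
      = σ.filter (fun x => x < a ∧ c a < c x) := by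
    ext x; simp only [Finset.mem_filter]
    exact ⟨fun ⟨h1, ⟨_, h2⟩, h3⟩ => ⟨h1, h3, h2⟩,
      fun ⟨h1, h3, h2⟩ => ⟨h1, ⟨lt_trans h3 hab, h2⟩, h3⟩⟩
  have hF4b : (σ.filter fun x => (x < b ∧ c a < c x) ∧ x = a).card = 0 := by
    rw [Finset.card_eq_zero, Finset.filter_eq_empty_iff]
    rintro x hx ⟨⟨_, h2⟩, rfl⟩
    exact lt_irrefl _ h2
  have hF4c : σ.filter (fun x => (x < b ∧ c a < c x) ∧ a < x)
      = σ.filter (fun x => (a < x ∧ x < b) ∧ c a < c x) := by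
    ext x; simp only [Finset.mem_filter]
    exact ⟨fun ⟨h1, ⟨h2, h4⟩, h3⟩ => ⟨h1, ⟨h3, h2⟩, h4⟩,
      fun ⟨h1, ⟨h3, h2⟩, h4⟩ => ⟨h1, ⟨h2, h4⟩, h3⟩⟩
  rw [hF4a, hF4b, hF4c] at hF4
  -- F5 : B_a = t₂ + B_b
  have hF5 := card_filter_trichotomy σ (fun x => a < x ∧ c x < c a) id b
  simp only [id] at hF5
  have hF5a : σ.filter (fun x => (a < x ∧ c x < c a) ∧ x < b)
      = σ.filter (fun x => (a < x ∧ x < b) ∧ c x < c a) := by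
    ext x; simp only [Finset.mem_filter]
    exact ⟨fun ⟨h1, ⟨h2, h4⟩, h3⟩ => ⟨h1, ⟨h2, h3⟩, h4⟩,
      fun ⟨h1, ⟨h2, h3⟩, h4⟩ => ⟨h1, ⟨h2, h4⟩, h3⟩⟩
  have hF5b : (σ.filter fun x => (a < x ∧ c x < c a) ∧ x = b).card = 0 := by
    rw [Finset.card_eq_zero, Finset.filter_eq_empty_iff]
    rintro x hx ⟨⟨_, h2⟩, rfl⟩
    rw [hc] at h2
    exact lt_irrefl _ h2
  have hF5c : σ.filter (fun x => (a < x ∧ c x < c a) ∧ b < x)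
      = σ.filter (fun x => b < x ∧ c x < c a) := by
    ext x; simp only [Finset.mem_filter]
    exact ⟨fun ⟨h1, ⟨_, h2⟩, h3⟩ => ⟨h1, h3, h2⟩,
      fun ⟨h1, h3, h2⟩ => ⟨h1, ⟨lt_trans hab h3, h2⟩, h3⟩⟩
  rw [hF5a, hF5b, hF5c] at hF5
  -- F6 : t = t₂ + 0 + t₁
  have hF6 := card_filter_trichotomy σ (fun x => a < x ∧ x < b) c (c a)
  have hF6b : (σ.filter fun x => (a < x ∧ x < b) ∧ c x = c a).card = 0 := by
    rw [Finset.card_eq_zero, Finset.filter_eq_empty_iff]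
    rintro x hx ⟨⟨h1, h2⟩, hcx⟩
    have hx' : x ∈ σ.erase a := Finset.mem_erase.2 ⟨ne_of_gt h1, hx⟩
    have : x = b := hinj hx' hba (by rw [hcx, hc])
    rw [this] at h2
    exact lt_irrefl _ h2
  rw [hF6b] at hF6
  -- final arithmetic
  show (-1:ℤ) ^ ((σ.filter fun w => w < a).card) * _
      + (-1:ℤ) ^ ((σ.filter fun w => w < b).card) * _ = 0
  rw [← pow_add, ← pow_add]
  have hodd : (((σ.filter fun w => w < a).card + invc c (σ.erase a))
      + ((σ.filter fun w => w < b).card + invc c (σ.erase b))) % 2 = 1 := by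
    omega
  rw [neg_one_pow_eq_neg_of hodd]
  ring

end Sec4
section Sec2

variable {α : Type*} [LinearOrder α]

variable (F : Type*) [Field F] (V : Type*) [LinearOrder V]

/-- Boundary operator on inhomogeneous chains (including the empty simplex). -/
noncomputable def bd : (Finset V →₀ F) →ₗ[F] (Finset V →₀ F) :=
  Finsupp.lsum F fun s => ∑ u ∈ s.attach,
    ((-1 : ℤ) ^ ((s.filter (fun w => w < u.1)).card)) • Finsupp.lsingle (s.erase u.1)

lemma bd_single (σ : Finset V) (a : F) :
    bd F V (Finsupp.single σ a)
      = ∑ u ∈ σ, Finsupp.single (σ.erase u) (((esgn σ u : ℤ) : F) * a) := by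
  rw [bd, Finsupp.lsum_single, LinearMap.sum_apply]
  rw [← Finset.sum_attach σ (fun u => Finsupp.single (σ.erase u) (((esgn σ u : ℤ) : F) * a))]
  refine Finset.sum_congr rfl fun u _ => ?_
  rw [LinearMap.smul_apply, Finsupp.lsingle_apply, Finsupp.smul_single]
  congr 1
  rw [zsmul_eq_mul]
  norm_cast

variable (v : V)

/-- The "delete `v`" operator. -/
noncomputable def Dv : (Finset V →₀ F) →ₗ[F] (Finset V →₀ F) :=
  Finsupp.lsum F fun s =>
    if v ∈ s then esgn s v • Finsupp.lsingle (s.erase v) else 0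

lemma Dv_single (σ : Finset V) (a : F) :
    Dv F V v (Finsupp.single σ a)
      = if v ∈ σ then Finsupp.single (σ.erase v) (((esgn σ v : ℤ) : F) * a) else 0 := by
  rw [Dv, Finsupp.lsum_single]
  by_cases h : v ∈ σ
  · rw [if_pos h, if_pos h, LinearMap.smul_apply, Finsupp.lsingle_apply, Finsupp.smul_single]
    congr 1
    rw [zsmul_eq_mul]
  · rw [if_neg h, if_neg h, LinearMap.zero_apply]

lemma Dv_bd (x : Finset V →₀ F) : Dv F V v (bd F V x) = -(bd F V (Dv F V v x)) := by
  have : (Dv F V v).comp (bd F V) = -((bd F V).comp (Dv F V v)) := by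
    apply Finsupp.lhom_ext
    intro σ a
    simp only [LinearMap.comp_apply, LinearMap.neg_apply]
    rw [bd_single, map_sum, Dv_single]
    by_cases hv : v ∈ σ
    · rw [if_pos hv, bd_single, ← Finset.sum_neg_distrib]
      have hstep : ∀ u ∈ σ,
          Dv F V v (Finsupp.single (σ.erase u) (((esgn σ u : ℤ) : F) * a))
          = if u = v then 0 else
            Finsupp.single ((σ.erase u).erase v)
              (((esgn (σ.erase u) v : ℤ) : F) * (((esgn σ u : ℤ) : F) * a)) := by
        intro u hu
        rw [Dv_single]
        by_cases huv : u = v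
        · rw [if_pos huv, if_neg (by simp [huv])]
        · rw [if_neg huv, if_pos (Finset.mem_erase.2 ⟨fun hh => huv hh.symm, hv⟩)]
      rw [Finset.sum_congr rfl hstep]
      rw [← Finset.sum_erase (a := v) σ (f := fun u =>
        if u = v then 0 else Finsupp.single ((σ.erase u).erase v)
          (((esgn (σ.erase u) v : ℤ) : F) * (((esgn σ u : ℤ) : F) * a))) (by simp)]
      refine Finset.sum_congr rfl fun u hu => ?_
      have huv : u ≠ v := (Finset.mem_erase.1 hu).1
      have humem : u ∈ σ := Finset.mem_of_mem_erase hu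
      rw [if_neg huv, Finset.erase_right_comm, ← Finsupp.single_neg]
      congr 1
      have h1 := esgn_comm humem hv huv
      have h2 : ((esgn σ u * esgn (σ.erase u) v : ℤ) : F)
          = ((-(esgn σ v * esgn (σ.erase v) u) : ℤ) : F) := by exact_mod_cast congrArg _ h1
      push_cast at h2
      linear_combination a * h2
    · rw [if_neg hv, map_zero, neg_zero]
      refine Finset.sum_eq_zero fun u hu => ?_
      rw [Dv_single, if_neg (fun hh => hv (Finset.mem_of_mem_erase hh))]
  exact LinearMap.congr_fun this x


end Sec2
section Sec5

variable {V : Type*} [LinearOrder V]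
variable {ι : Type*} [LinearOrder ι]

variable (F : Type*) [Field F]


/-- The "rainbow coefficient" functional: signed sum of coefficients of the simplices
whose colours biject onto `U`. -/
noncomputable def th (c : V → ι) (U : Finset ι) : (Finset V →₀ F) →ₗ[F] F :=
  Finsupp.lsum F fun s =>
    if s.image c = U ∧ s.card = U.card
    then (((-1 : ℤ) ^ (invc c s) : ℤ) : F) • (LinearMap.id : F →ₗ[F] F) else 0

lemma th_single (c : V → ι) (U : Finset ι) (σ : Finset V) (a : F) :
    th F c U (Finsupp.single σ a)
      = if σ.image c = U ∧ σ.card = U.card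
        then (((-1 : ℤ) ^ (invc c σ) : ℤ) : F) * a else 0 := by
  rw [th, Finsupp.lsum_single]
  split_ifs with hc
  · rw [LinearMap.smul_apply, LinearMap.id_apply, smul_eq_mul]
  · rfl

lemma th_eq_zero (c : V → ι) (U : Finset ι) (x : Finset V →₀ F)
    (hx : ∀ σ ∈ x.support, ¬ (σ.image c = U ∧ σ.card = U.card)) :
    th F c U x = 0 := by
  have hx' : x = ∑ σ ∈ x.support, Finsupp.single σ (x σ) := (Finsupp.sum_single x).symm
  rw [hx', map_sum]
  refine Finset.sum_eq_zero fun σ hσ => ?_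
  rw [th_single, if_neg (hx σ hσ)]

/-- The key chain-map identity for the rainbow functional. -/
lemma th_bd_single (c : V → ι) (T : Finset ι) {i : ι} (hi : i ∈ T) (σ : Finset V)
    (hcard : σ.card = T.card) (hsub : σ.image c ⊆ T) (a : F) :
    th F c (T.erase i) (bd F V (Finsupp.single σ a))
      = ((esgn T i : ℤ) : F) * th F c T (Finsupp.single σ a) := by
  rw [bd_single, map_sum]
  have hterm : ∀ u ∈ σ,
      th F c (T.erase i) (Finsupp.single (σ.erase u) (((esgn σ u : ℤ) : F) * a))
      = if ((σ.erase u).image c = T.erase i ∧ (σ.erase u).card = (T.erase i).card)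
        then (((-1 : ℤ) ^ (invc c (σ.erase u)) : ℤ) : F) * (((esgn σ u : ℤ) : F) * a)
        else 0 := fun u _ => th_single F c _ _ _
  rw [Finset.sum_congr rfl hterm, th_single]
  have hTpos : 0 < T.card := Finset.card_pos.2 ⟨i, hi⟩
  have hcarde : ∀ u ∈ σ, (σ.erase u).card = (T.erase i).card := by
    intro u hu
    rw [Finset.card_erase_of_mem hu, Finset.card_erase_of_mem hi, hcard]
  by_cases hinj : (σ.image c).card = σ.card
  · -- injective colouring
    have hinjOn : Set.InjOn c ↑σ := Finset.card_image_iff.1 hinj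
    have himg : σ.image c = T := by
      apply Finset.eq_of_subset_of_card_le hsub
      rw [hinj, hcard]
    obtain ⟨av, hav, hcav⟩ := Finset.mem_image.1 (himg ▸ hi)
    rw [if_pos ⟨himg, hcard⟩]
    rw [Finset.sum_eq_single_of_mem av hav]
    · have hcond : (σ.erase av).image c = T.erase i := by
        rw [image_erase_of_injOn c hinjOn hav, himg, hcav]
      rw [if_pos ⟨hcond, hcarde av hav⟩]
      have h1 := case1_sign c hav hinjOn
      rw [himg, hcav] at h1
      have h2 : ((esgn σ av * (-1 : ℤ) ^ invc c (σ.erase av) : ℤ) : F)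
          = (((-1 : ℤ) ^ ((T.filter fun j => j < i).card) * (-1 : ℤ) ^ invc c σ : ℤ) : F) := by
        exact_mod_cast congrArg _ h1
      push_cast at h2
      push_cast
      have hesgn : ((esgn T i : ℤ) : F) = ((-1 : ℤ) ^ ((T.filter fun j => j < i).card) : ℤ) := by
        rfl
      rw [hesgn]
      push_cast
      linear_combination a * h2
    · intro u hu hne
      rw [if_neg]
      rintro ⟨hcond, -⟩
      rw [image_erase_of_injOn c hinjOn hu, himg] at hcond
      have hcu : c u ≠ i := fun hh => hne (hinjOn hu hav (by rw [hh, hcav]))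
      have : i ∈ T.erase (c u) := Finset.mem_erase.2 ⟨Ne.symm hcu, hi⟩
      rw [hcond] at this
      exact (Finset.notMem_erase i T) this
  · -- non-injective colouring
    have hninj : ¬ Set.InjOn c ↑σ := fun hI => hinj (Finset.card_image_of_injOn hI)
    have hpair : ∃ p ∈ σ, ∃ q ∈ σ, p < q ∧ c p = c q := by
      rw [Set.InjOn] at hninj
      push_neg at hninj
      obtain ⟨x, hx, y, hy, hcxy, hxy⟩ := hninj
      rcases hxy.lt_or_gt with h | h
      · exact ⟨x, hx, y, hy, h, hcxy⟩
      · exact ⟨y, hy, x, hx, h, hcxy.symm⟩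
    obtain ⟨p, hp, q, hq, hpq, hcpq⟩ := hpair
    have hqerase : q ∈ σ.erase p := Finset.mem_erase.2 ⟨ne_of_gt hpq, hq⟩
    have hperase : p ∈ σ.erase q := Finset.mem_erase.2 ⟨ne_of_lt hpq, hp⟩
    rw [if_neg (fun hcd => hninj (Finset.card_image_iff.1 (by rw [hcd.1, ← hcd.2])))]
    rw [mul_zero]
    have hsub2 : ({p, q} : Finset V) ⊆ σ := by
      intro x hx
      rcases Finset.mem_insert.1 hx with rfl | hx
      · exact hp
      · rw [Finset.mem_singleton.1 hx]; exact hq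
    rw [← Finset.sum_subset hsub2]
    · rw [Finset.sum_pair (ne_of_lt hpq)]
      by_cases himg2 : σ.image c = T.erase i
      · have himgp : (σ.erase p).image c = T.erase i := by
          rw [image_erase_of_pair c hcpq.symm hqerase, himg2]
        have himgq : (σ.erase q).image c = T.erase i := by
          rw [image_erase_of_pair c hcpq hperase, himg2]
        rw [if_pos ⟨himgp, hcarde p hp⟩, if_pos ⟨himgq, hcarde q hq⟩]
        have hinjOn' : Set.InjOn c ↑(σ.erase p) := by
          apply Finset.card_image_iff.1
          rw [himgp, hcarde p hp]
        have h1 := case2_sign c hp hq hpq hcpq hinjOn'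
        have h2 : ((esgn σ p * (-1 : ℤ) ^ invc c (σ.erase p)
            + esgn σ q * (-1 : ℤ) ^ invc c (σ.erase q) : ℤ) : F) = ((0 : ℤ) : F) := by
          exact_mod_cast congrArg (fun z : ℤ => (z : F)) h1
        push_cast at h2
        push_cast
        linear_combination a * h2
      · have himgp : (σ.erase p).image c ≠ T.erase i := by
          rw [image_erase_of_pair c hcpq.symm hqerase]; exact himg2
        have himgq : (σ.erase q).image c ≠ T.erase i := by
          rw [image_erase_of_pair c hcpq hperase]; exact himg2
        rw [if_neg (fun hcd => himgp hcd.1), if_neg (fun hcd => himgq hcd.1), add_zero]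
    · intro u hu hnu
      rw [if_neg]
      rintro ⟨hcond, -⟩
      have hpu : p ∈ σ.erase u := Finset.mem_erase.2
        ⟨fun hh => hnu (by rw [hh]; exact Finset.mem_insert_self _ _), hp⟩
      have hqu : q ∈ σ.erase u := Finset.mem_erase.2
        ⟨fun hh => hnu (by rw [hh]; exact Finset.mem_insert_of_mem (Finset.mem_singleton_self _)), hq⟩
      have hIn : Set.InjOn c ↑(σ.erase u) := by
        apply Finset.card_image_iff.1
        rw [hcond, hcarde u hu]
      exact (ne_of_lt hpq) (hIn hpu hqu hcpq)

/-- Linear version of the chain-map identity. -/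
lemma th_bd (c : V → ι) (T : Finset ι) {i : ι} (hi : i ∈ T) (x : Finset V →₀ F)
    (hx : ∀ σ ∈ x.support, σ.card = T.card ∧ σ.image c ⊆ T) :
    th F c (T.erase i) (bd F V x) = ((esgn T i : ℤ) : F) * th F c T x := by
  have hx' : x = ∑ σ ∈ x.support, Finsupp.single σ (x σ) := (Finsupp.sum_single x).symm
  rw [hx', map_sum, map_sum, map_sum, Finset.mul_sum]
  refine Finset.sum_congr rfl fun σ hσ => ?_
  exact th_bd_single F c T hi σ (hx σ hσ).1 (hx σ hσ).2 _


end Sec5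
section Sec6
variable (𝕜 : Type*) [Field 𝕜] (X : Type*) [LinearOrder X]

noncomputable def toBig (n : ℕ) : Chains 𝕜 X n →ₗ[𝕜] (Finset X →₀ 𝕜) :=
  Finsupp.lmapDomain 𝕜 𝕜 Subtype.val

lemma toBig_single (n : ℕ) (p : {s : Finset X // s.card = n + 1}) (a : 𝕜) :
    toBig 𝕜 X n (Finsupp.single p a) = Finsupp.single p.1 a := by
  rw [toBig, Finsupp.lmapDomain_apply, Finsupp.mapDomain_single]

lemma toBig_injective (n : ℕ) : Function.Injective (toBig 𝕜 X n) := by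
  intro x y hxy
  rw [toBig, Finsupp.lmapDomain_apply, Finsupp.lmapDomain_apply] at hxy
  exact Finsupp.mapDomain_injective Subtype.val_injective hxy

lemma toBig_support (n : ℕ) (x : Chains 𝕜 X n) {σ : Finset X}
    (hσ : σ ∈ (toBig 𝕜 X n x).support) :
    ∃ p : {s : Finset X // s.card = n + 1}, p ∈ x.support ∧ σ = p.1 := by
  rw [toBig, Finsupp.lmapDomain_apply] at hσ
  have h2 := Finsupp.mapDomain_support hσ
  rcases Finset.mem_image.1 h2 with ⟨p, hp, hpσ⟩
  exact ⟨p, hp, hpσ.symm⟩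

lemma toBig_bdry (n : ℕ) (w : Chains 𝕜 X (n + 1)) :
    toBig 𝕜 X n (bdry 𝕜 𝕜 X n w) = bd 𝕜 X (toBig 𝕜 X (n + 1) w) := by
  induction w using Finsupp.induction_linear with
  | zero => simp
  | add f g hf hg => simp only [map_add, hf, hg]
  | single p a =>
    rw [toBig_single, bd_single, bdry, Finsupp.lsum_single, LinearMap.sum_apply, map_sum]
    rw [← Finset.sum_attach (p.1)
      (fun u => Finsupp.single ((p.1).erase u) (((esgn (p.1) u : ℤ) : 𝕜) * a))]
    refine Finset.sum_congr rfl fun u _ => ?_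
    rw [LinearMap.smul_apply, Finsupp.lsingle_apply, map_zsmul, toBig_single,
      Finsupp.smul_single]
    congr 1
    rw [zsmul_eq_mul]
    rfl

lemma esgn_singleton (x : X) : esgn ({x} : Finset X) x = 1 := by
  unfold esgn
  rw [Finset.filter_singleton, if_neg (lt_irrefl x), Finset.card_empty, pow_zero]

lemma bd_toBig_zero_apply (z : Chains 𝕜 X 0) :
    (bd 𝕜 X (toBig 𝕜 X 0 z)) ∅ = aug 𝕜 𝕜 X z := by
  induction z using Finsupp.induction_linear with
  | zero => simp
  | add f g hf hg => rw [map_add, map_add, map_add, Finsupp.add_apply, hf, hg]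
  | single p a =>
    obtain ⟨x, hx⟩ := Finset.card_eq_one.1 p.2
    rw [toBig_single, bd_single, aug, Finsupp.lsum_single, LinearMap.id_apply]
    rw [Finset.sum_apply']
    rw [show (p : Finset X) = {x} from hx]
    rw [Finset.sum_singleton, esgn_singleton, Finset.erase_singleton]
    rw [Finsupp.single_eq_same]
    push_cast
    ring

lemma fill_of_subsingleton (KS : Set (Finset X)) (k : ℕ)
    (hvan : Subsingleton (redH 𝕜 𝕜 X KS k)) {z : Chains 𝕜 X k}
    (hz : z ∈ cyclesIn 𝕜 𝕜 X KS k) :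
    ∃ w ∈ chainsIn 𝕜 𝕜 X KS (k + 1), bdry 𝕜 𝕜 X k w = z := by
  have h0 : (Submodule.Quotient.mk (⟨z, hz⟩ : cyclesIn 𝕜 𝕜 X KS k) :
      redH 𝕜 𝕜 X KS k) = 0 := Subsingleton.elim _ _
  have h1 := (Submodule.Quotient.mk_eq_zero _).1 h0
  rw [Submodule.mem_comap] at h1
  rcases Submodule.mem_map.1 h1 with ⟨w, hw, hww⟩
  exact ⟨w, hw, hww⟩

end Sec6

section Sec7
variable {𝕜 : Type*} [Field 𝕜] {X : Type*} [LinearOrder X] {J : Type*} [LinearOrder J]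

lemma toBig_subtypeDomain (n : ℕ) (x : Finset X →₀ 𝕜)
    (hx : ∀ σ ∈ x.support, σ.card = n + 1) :
    toBig 𝕜 X n (Finsupp.subtypeDomain (fun s => s.card = n + 1) x) = x := by
  rw [toBig, Finsupp.lmapDomain_apply]
  ext σ
  by_cases h : σ.card = n + 1
  · have h2 := Finsupp.mapDomain_apply Subtype.val_injective
      (Finsupp.subtypeDomain (fun s : Finset X => s.card = n + 1) x)
      (⟨σ, h⟩ : {s : Finset X // s.card = n + 1})
    exact h2.trans Finsupp.subtypeDomain_apply
  · have h3 : σ ∉ (Finsupp.mapDomain Subtype.val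
        (Finsupp.subtypeDomain (fun s : Finset X => s.card = n + 1) x)).support := by
      intro hmem
      rcases Finset.mem_image.1 (Finsupp.mapDomain_support hmem) with ⟨p, _, hpσ⟩
      exact h (hpσ ▸ p.2)
    have h4 : σ ∉ x.support := fun hmem => h (hx σ hmem)
    rw [Finsupp.notMem_support_iff.1 h3, Finsupp.notMem_support_iff.1 h4]

/-- The inductive compatibility property of the chain system. -/
def GoodAt (K : Set (Finset X)) (c : X → J)
    (W : Finset (J) → (Finset X →₀ 𝕜)) (S : Finset (J)) : Prop :=
  (∀ σ ∈ (W S).support, σ.card = S.card ∧ σ ∈ K ∧ ∀ x ∈ σ, c x ∈ S)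
  ∧ bd 𝕜 X (W S) = ∑ i ∈ S, ((esgn S i : ℤ) : 𝕜) • W (S.erase i)

lemma bd_z_zero (K : Set (Finset X)) (c : X → J)
    (W : Finset (J) → (Finset X →₀ 𝕜)) (S : Finset (J))
    (hG : ∀ i ∈ S, GoodAt K c W (S.erase i)) :
    bd 𝕜 X (∑ i ∈ S, ((esgn S i : ℤ) : 𝕜) • W (S.erase i)) = 0 := by
  rw [map_sum]
  have h1 : ∀ i ∈ S, bd 𝕜 X (((esgn S i : ℤ) : 𝕜) • W (S.erase i))
      = ∑ j ∈ S.erase i, (((esgn S i : ℤ) : 𝕜) * ((esgn (S.erase i) j : ℤ) : 𝕜))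
          • W ((S.erase i).erase j) := by
    intro i hi
    rw [map_smul, (hG i hi).2, Finset.smul_sum]
    exact Finset.sum_congr rfl fun j _ => smul_smul _ _ _
  rw [Finset.sum_congr rfl h1]
  have h2 : ∀ i ∈ S, (∑ j ∈ S.erase i,
      (((esgn S i : ℤ) : 𝕜) * ((esgn (S.erase i) j : ℤ) : 𝕜)) • W ((S.erase i).erase j))
      = ∑ j ∈ S, if j ≠ i then
          (((esgn S i : ℤ) : 𝕜) * ((esgn (S.erase i) j : ℤ) : 𝕜)) • W ((S.erase i).erase j)
        else 0 := by
    intro i _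
    rw [← Finset.filter_ne' S i, Finset.sum_filter]
  rw [Finset.sum_congr rfl h2, ← Finset.sum_product']
  rw [show (∑ p ∈ S ×ˢ S, if p.2 ≠ p.1 then
      (((esgn S p.1 : ℤ) : 𝕜) * ((esgn (S.erase p.1) p.2 : ℤ) : 𝕜))
        • W ((S.erase p.1).erase p.2) else 0)
    = ∑ p ∈ (S ×ˢ S).filter (fun p => p.2 ≠ p.1),
      (((esgn S p.1 : ℤ) : 𝕜) * ((esgn (S.erase p.1) p.2 : ℤ) : 𝕜))
        • W ((S.erase p.1).erase p.2) from (Finset.sum_filter _ _).symm]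
  apply Finset.sum_involution (g := fun p _ => (p.2, p.1))
  · intro p hp
    rcases Finset.mem_filter.1 hp with ⟨hmem, hne⟩
    rcases Finset.mem_product.1 hmem with ⟨h1', h2'⟩
    have hcomm := esgn_comm h1' h2' (fun hh => hne hh.symm)
    have hcast : ((esgn S p.1 : ℤ) : 𝕜) * ((esgn (S.erase p.1) p.2 : ℤ) : 𝕜)
        = -(((esgn S p.2 : ℤ) : 𝕜) * ((esgn (S.erase p.2) p.1 : ℤ) : 𝕜)) := by
      have hq := congrArg (fun z : ℤ => (z : 𝕜)) hcomm
      push_cast at hq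
      exact hq
    have hset : (S.erase p.2).erase p.1 = (S.erase p.1).erase p.2 :=
      Finset.erase_right_comm
    simp only [hset]
    rw [← add_smul]
    rw [show ((esgn S p.1 : ℤ) : 𝕜) * ((esgn (S.erase p.1) p.2 : ℤ) : 𝕜)
        + ((esgn S p.2 : ℤ) : 𝕜) * ((esgn (S.erase p.2) p.1 : ℤ) : 𝕜) = 0 from by
      linear_combination hcast]
    rw [zero_smul]
  · intro p hp _
    rcases Finset.mem_filter.1 hp with ⟨_, hne⟩
    intro hh
    exact hne (congrArg Prod.fst hh)
  · intro p hp
    rcases Finset.mem_filter.1 hp with ⟨hmem, hne⟩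
    rcases Finset.mem_product.1 hmem with ⟨h1', h2'⟩
    exact Finset.mem_filter.2 ⟨Finset.mem_product.2 ⟨h2', h1'⟩, fun hh => hne hh.symm⟩
  · intro p hp
    rfl

lemma step_exists (K : Set (Finset X)) (c : X → J) (v : X)
    (hvK : ({v} : Finset X) ∈ K)
    (hbase : ∀ i : J, ∃ x : X, c x = i ∧ ({x} : Finset X) ∈ K)
    (hfill : ∀ S : Finset (J), 2 ≤ S.card →
      ∀ z ∈ cyclesIn 𝕜 𝕜 X {s ∈ K | ∀ w ∈ s, c w ∈ S} (S.card - 2),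
      ∃ w ∈ chainsIn 𝕜 𝕜 X {s ∈ K | ∀ w ∈ s, c w ∈ S} (S.card - 2 + 1),
        bdry 𝕜 𝕜 X (S.card - 2) w = z) :
    ∀ n : ℕ, ∃ W : Finset (J) → (Finset X →₀ 𝕜),
      W ∅ = Finsupp.single ∅ 1 ∧ W {c v} = Finsupp.single {v} 1 ∧
      (∀ S, S.card ≤ n → S.Nonempty → GoodAt K c W S) := by
  have hbd_singleton : ∀ (x : X), bd 𝕜 X (Finsupp.single ({x} : Finset X) (1 : 𝕜))
      = Finsupp.single ∅ 1 := by
    intro x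
    rw [bd_single, Finset.sum_singleton, esgn_singleton, Finset.erase_singleton]
    norm_num
  intro n
  induction n with
  | zero =>
    refine ⟨fun S => if S = ∅ then Finsupp.single ∅ 1
      else if S = {c v} then Finsupp.single {v} 1 else 0, by simp, ?_, ?_⟩
    · show (if ({c v} : Finset (J)) = ∅ then (Finsupp.single ∅ 1 : Finset X →₀ 𝕜)
        else if ({c v} : Finset (J)) = {c v} then Finsupp.single {v} 1 else 0)
        = Finsupp.single {v} 1
      rw [if_neg (Finset.singleton_ne_empty _), if_pos rfl]
    · intro S hcard hne
      exact absurd (Finset.card_pos.2 hne) (by omega)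
  | succ n ih =>
    obtain ⟨W, hW0, hWv, hWG⟩ := ih
    have hch : ∀ S : Finset (J), S.card = n + 1 → S ≠ {c v} →
        ∃ w : Finset X →₀ 𝕜,
          (∀ σ ∈ w.support, σ.card = S.card ∧ σ ∈ K ∧ ∀ x ∈ σ, c x ∈ S)
          ∧ bd 𝕜 X w = ∑ i ∈ S, ((esgn S i : ℤ) : 𝕜) • W (S.erase i) := by
      intro S hcard hSne
      rcases Nat.eq_zero_or_pos n with rfl | hn
      · -- singletons
        obtain ⟨i, rfl⟩ := Finset.card_eq_one.1 hcard
        obtain ⟨x, hcx, hxK⟩ := hbase i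
        refine ⟨Finsupp.single {x} 1, ?_, ?_⟩
        · intro σ hσ
          rw [Finsupp.support_single_ne_zero _ one_ne_zero, Finset.mem_singleton] at hσ
          subst hσ
          refine ⟨by simp, hxK, ?_⟩
          intro y hy
          rw [Finset.mem_singleton.1 hy, hcx]
          exact Finset.mem_singleton_self i
        · rw [hbd_singleton, Finset.sum_singleton, esgn_singleton, Finset.erase_singleton, hW0]
          norm_num
      · -- the homological step
        have hzsupp : ∀ σ ∈ (∑ i ∈ S, ((esgn S i : ℤ) : 𝕜) • W (S.erase i)).support,
            σ.card = n ∧ σ ∈ K ∧ ∀ x ∈ σ, c x ∈ S := by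
          intro σ hσ
          obtain ⟨i, hi, hσi⟩ := Finsupp.mem_support_finset_sum σ hσ
          have hσW : σ ∈ (W (S.erase i)).support := Finsupp.support_smul hσi
          have hGi := hWG (S.erase i)
            (by rw [Finset.card_erase_of_mem hi]; omega)
            (Finset.card_pos.1 (by rw [Finset.card_erase_of_mem hi]; omega))
          obtain ⟨hc1, hc2, hc3⟩ := hGi.1 σ hσW
          refine ⟨by rw [hc1, Finset.card_erase_of_mem hi]; omega, hc2, ?_⟩
          exact fun x hx => Finset.mem_of_mem_erase (hc3 x hx)
        have hbdz : bd 𝕜 X (∑ i ∈ S, ((esgn S i : ℤ) : 𝕜) • W (S.erase i)) = 0 := by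
          apply bd_z_zero K c W S
          intro i hi
          exact hWG (S.erase i) (by rw [Finset.card_erase_of_mem hi]; omega)
            (Finset.card_pos.1 (by rw [Finset.card_erase_of_mem hi]; omega))
        obtain ⟨k, rfl⟩ : ∃ k, n = k + 1 := ⟨n - 1, by omega⟩
        set z : Finset X →₀ 𝕜 := ∑ i ∈ S, ((esgn S i : ℤ) : 𝕜) • W (S.erase i) with hzdef
        set zc : Chains 𝕜 X k := Finsupp.subtypeDomain (fun s => s.card = k + 1) z with hzcdef
        have hzc : toBig 𝕜 X k zc = z :=
          toBig_subtypeDomain k z (fun σ hσ => (hzsupp σ hσ).1)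
        have hmem : zc ∈ cyclesIn 𝕜 𝕜 X {s ∈ K | ∀ w ∈ s, c w ∈ S} k := by
          refine Submodule.mem_inf.2 ⟨?_, ?_⟩
          · cases k with
            | zero =>
              rw [cycles, LinearMap.mem_ker, ← bd_toBig_zero_apply, hzc, hbdz]
              rfl
            | succ k' =>
              rw [cycles, LinearMap.mem_ker]
              apply toBig_injective 𝕜 X k'
              rw [toBig_bdry, hzc, hbdz, map_zero]
          · rw [chainsIn, Finsupp.mem_supported]
            intro p hp
            rw [hzcdef, Finsupp.support_subtypeDomain, Finset.mem_coe,
              Finset.mem_subtype] at hp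
            obtain ⟨-, hc2, hc3⟩ := hzsupp p.1 hp
            exact ⟨hc2, hc3⟩
        have hrw : S.card - 2 = k := by omega
        have hfillS := hfill S (by omega)
        rw [hrw] at hfillS
        obtain ⟨w', hw'1, hw'2⟩ := hfillS zc hmem
        refine ⟨toBig 𝕜 X (k + 1) w', ?_, ?_⟩
        · intro σ hσ
          obtain ⟨p, hp, rfl⟩ := toBig_support 𝕜 X (k + 1) w' hσ
          have hpK := (Finsupp.mem_supported _ _).1 hw'1 (Finset.mem_coe.2 hp)
          refine ⟨by rw [p.2]; omega, hpK.1, hpK.2⟩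
        · rw [← toBig_bdry, hw'2, hzc]
    classical
    choose! f hf1 hf2 using hch
    set W' : Finset (J) → Finset X →₀ 𝕜 :=
      fun S => if h : S.card = n + 1 ∧ S ≠ {c v} then f S else W S with hW'def
    have hW'low : ∀ T : Finset (J), T.card ≤ n → W' T = W T := by
      intro T hT
      simp only [hW'def]
      rw [dif_neg]
      rintro ⟨h1, -⟩
      omega
    have hW'0 : W' ∅ = Finsupp.single ∅ 1 := by
      simp only [hW'def]
      rw [dif_neg, hW0]
      rintro ⟨h1, -⟩
      rw [Finset.card_empty] at h1
      omega
    have hW'cv : W' {c v} = Finsupp.single {v} 1 := by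
      simp only [hW'def]
      rw [dif_neg (fun h => h.2 rfl), hWv]
    refine ⟨W', hW'0, hW'cv, ?_⟩
    intro S hScard hSne
    by_cases hSn : S.card ≤ n
    · have hGS := hWG S hSn hSne
      constructor
      · rw [hW'low S hSn]
        exact hGS.1
      · rw [hW'low S hSn, hGS.2]
        refine Finset.sum_congr rfl fun i hi => ?_
        rw [hW'low (S.erase i) (by rw [Finset.card_erase_of_mem hi]; omega)]
    · have hScard' : S.card = n + 1 := by omega
      by_cases hScv : S = {c v}
      · subst hScv
        constructor
        · rw [hW'cv]
          intro σ hσ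
          rw [Finsupp.support_single_ne_zero _ one_ne_zero, Finset.mem_singleton] at hσ
          subst hσ
          refine ⟨by simp, hvK, fun y hy => ?_⟩
          rw [Finset.mem_singleton.1 hy]
          exact Finset.mem_singleton_self _
        · rw [hW'cv, hbd_singleton, Finset.sum_singleton, esgn_singleton,
            Finset.erase_singleton, hW'0]
          norm_num
      · have hW'S : W' S = f S := by
          simp only [hW'def]
          rw [dif_pos ⟨hScard', hScv⟩]
        constructor
        · rw [hW'S]
          exact hf1 S hScard' hScv
        · rw [hW'S, hf2 S hScard' hScv]
          refine Finset.sum_congr rfl fun i hi => ?_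
          rw [hW'low (S.erase i) (by rw [Finset.card_erase_of_mem hi]; omega)]

end Sec7

section Sec8
variable {𝕜 : Type*} [Field 𝕜] {X : Type*} [LinearOrder X] {J : Type*} [LinearOrder J]

lemma Dv_support (v : X) (x : Finset X →₀ 𝕜) {σ : Finset X}
    (hσ : σ ∈ (Dv 𝕜 X v x).support) :
    ∃ ρ ∈ x.support, v ∈ ρ ∧ σ = ρ.erase v := by
  have hx' : x = ∑ ρ ∈ x.support, Finsupp.single ρ (x ρ) := (Finsupp.sum_single x).symm
  have hDx : Dv 𝕜 X v x = ∑ ρ ∈ x.support, Dv 𝕜 X v (Finsupp.single ρ (x ρ)) := by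
    conv_lhs => rw [hx']
    rw [map_sum]
  rw [hDx] at hσ
  obtain ⟨ρ, hρ, hσρ⟩ := Finsupp.mem_support_finset_sum σ hσ
  rw [Dv_single] at hσρ
  by_cases hv : v ∈ ρ
  · rw [if_pos hv] at hσρ
    exact ⟨ρ, hρ, hv, Finset.mem_singleton.1 (Finsupp.support_single_subset hσρ)⟩
  · rw [if_neg hv] at hσρ
    simp at hσρ

lemma Dv_eq_zero (v : X) (x : Finset X →₀ 𝕜) (hx : ∀ σ ∈ x.support, v ∉ σ) :
    Dv 𝕜 X v x = 0 := by
  have hx' : x = ∑ ρ ∈ x.support, Finsupp.single ρ (x ρ) := (Finsupp.sum_single x).symm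
  conv_lhs => rw [hx']
  rw [map_sum]
  exact Finset.sum_eq_zero fun ρ hρ => by rw [Dv_single, if_neg (hx ρ hρ)]

lemma mu_ne_zero (K : Set (Finset X)) (hK : IsComplex K) (c : X → J) (v : X)
    (hiso : ∀ u : X, u ≠ v → c u = c v → ({v, u} : Finset X) ∉ K)
    (W : Finset J → (Finset X →₀ 𝕜))
    (hWv : W {c v} = Finsupp.single {v} 1)
    (hG : ∀ S : Finset J, S.Nonempty → GoodAt K c W S) :
    ∀ S : Finset J, c v ∈ S → th 𝕜 c (S.erase (c v)) (Dv 𝕜 X v (W S)) ≠ 0 := by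
  intro S
  induction S using Finset.strongInduction with
  | _ S ih =>
  intro hcvS
  by_cases hS1 : S = {c v}
  · subst hS1
    rw [hWv, Dv_single, if_pos (Finset.mem_singleton_self v), Finset.erase_singleton,
      esgn_singleton, Finset.erase_singleton, th_single,
      if_pos ⟨Finset.image_empty c, rfl⟩]
    unfold invc
    simp
  · have hScard : 2 ≤ S.card := by
      have h1 : 1 ≤ S.card := Finset.card_pos.2 ⟨c v, hcvS⟩
      rcases Nat.lt_or_ge S.card 2 with h2 | h2
      · exfalso
        have h3 : S.card = 1 := by omega
        obtain ⟨j, rfl⟩ := Finset.card_eq_one.1 h3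
        rw [Finset.mem_singleton.1 hcvS] at hS1
        exact hS1 rfl
      · exact h2
    obtain ⟨i, hiT⟩ : (S.erase (c v)).Nonempty := by
      rw [← Finset.card_pos, Finset.card_erase_of_mem hcvS]
      omega
    have hiS : i ∈ S := Finset.mem_of_mem_erase hiT
    have hicv : i ≠ c v := (Finset.mem_erase.1 hiT).1
    have hGS := hG S ⟨c v, hcvS⟩
    have husupp : ∀ σ ∈ (Dv 𝕜 X v (W S)).support,
        σ.card = (S.erase (c v)).card ∧ σ.image c ⊆ S.erase (c v) := by
      intro σ hσ
      obtain ⟨ρ, hρ, hvρ, rfl⟩ := Dv_support v (W S) hσ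
      obtain ⟨hρc, hρK, hρcol⟩ := hGS.1 ρ hρ
      constructor
      · rw [Finset.card_erase_of_mem hvρ, Finset.card_erase_of_mem hcvS, hρc]
      · intro j hj
        rcases Finset.mem_image.1 hj with ⟨y, hy, rfl⟩
        rcases Finset.mem_erase.1 hy with ⟨hyv, hyρ⟩
        refine Finset.mem_erase.2 ⟨?_, hρcol y hyρ⟩
        intro hcy
        apply hiso y hyv hcy
        apply hK.2 ρ hρK
        · exact Finset.insert_subset_iff.2 ⟨hvρ, Finset.singleton_subset_iff.2 hyρ⟩
        · exact ⟨v, Finset.mem_insert_self _ _⟩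
    have hbdu : bd 𝕜 X (Dv 𝕜 X v (W S)) = - Dv 𝕜 X v (bd 𝕜 X (W S)) := by
      rw [Dv_bd, neg_neg]
    have hterm : ∀ j ∈ S, th 𝕜 c ((S.erase (c v)).erase i)
        (Dv 𝕜 X v (((esgn S j : ℤ) : 𝕜) • W (S.erase j)))
        = if j = i then ((esgn S i : ℤ) : 𝕜)
            * th 𝕜 c ((S.erase i).erase (c v)) (Dv 𝕜 X v (W (S.erase i))) else 0 := by
      intro j hj
      rw [map_smul, map_smul, smul_eq_mul]
      by_cases hji : j = i
      · subst hji
        rw [if_pos rfl]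
        congr 2
        rw [Finset.erase_right_comm]
      · rw [if_neg hji]
        by_cases hjcv : j = c v
        · subst hjcv
          have hzero : Dv 𝕜 X v (W (S.erase (c v))) = 0 := by
            apply Dv_eq_zero
            intro σ hσ hvσ
            have hGe := hG (S.erase (c v)) ⟨i, hiT⟩
            obtain ⟨-, -, hcol⟩ := hGe.1 σ hσ
            exact (Finset.notMem_erase (c v) S) (hcol v hvσ)
          rw [hzero, map_zero, mul_zero]
        · have hz0 : th 𝕜 c ((S.erase (c v)).erase i) (Dv 𝕜 X v (W (S.erase j))) = 0 := by
            apply th_eq_zero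
            intro σ hσ hcond
            obtain ⟨himg, -⟩ := hcond
            have hjmem : j ∈ (S.erase (c v)).erase i :=
              Finset.mem_erase.2 ⟨hji, Finset.mem_erase.2 ⟨hjcv, hj⟩⟩
            rw [← himg] at hjmem
            rcases Finset.mem_image.1 hjmem with ⟨y, hyσ, hcy⟩
            obtain ⟨ρ, hρ, hvρ, rfl⟩ := Dv_support v _ hσ
            have hGe := hG (S.erase j)
              ⟨c v, Finset.mem_erase.2 ⟨fun hh => hjcv hh.symm, hcvS⟩⟩
            obtain ⟨-, -, hcol⟩ := hGe.1 ρ hρ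
            have hyS : c y ∈ S.erase j := hcol y (Finset.mem_of_mem_erase hyσ)
            rw [hcy] at hyS
            exact (Finset.notMem_erase j S) hyS
          rw [hz0, mul_zero]
    have hmain := th_bd 𝕜 c (S.erase (c v)) hiT (Dv 𝕜 X v (W S)) husupp
    rw [hbdu, hGS.2] at hmain
    simp only [map_neg, map_sum] at hmain
    rw [Finset.sum_congr rfl hterm, Finset.sum_ite_eq' S i, if_pos hiS] at hmain
    intro h0
    rw [h0, mul_zero] at hmain
    have hx1 : ((esgn S i : ℤ) : 𝕜) ≠ 0 := by
      unfold esgn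
      push_cast
      exact pow_ne_zero _ (neg_ne_zero.2 one_ne_zero)
    have hIH := ih (S.erase i) (Finset.erase_ssubset hiS)
      (Finset.mem_erase.2 ⟨Ne.symm hicv, hcvS⟩)
    rw [neg_eq_zero] at hmain
    rcases mul_eq_zero.1 hmain with h | h
    · exact hx1 h
    · exact hIH h

lemma rainbow_generic [Fintype J] (K : Set (Finset X)) (hK : IsComplex K)
    (hvert : ∀ u : X, ({u} : Finset X) ∈ K) (c : X → J) (v : X)
    (hiso : ∀ u : X, u ≠ v → c u = c v → ({v, u} : Finset X) ∉ K)
    (hbase : ∀ i : J, ∃ x : X, c x = i ∧ ({x} : Finset X) ∈ K)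
    (hfill : ∀ S : Finset J, 2 ≤ S.card →
      ∀ z ∈ cyclesIn 𝕜 𝕜 X {s ∈ K | ∀ w ∈ s, c w ∈ S} (S.card - 2),
      ∃ w ∈ chainsIn 𝕜 𝕜 X {s ∈ K | ∀ w ∈ s, c w ∈ S} (S.card - 2 + 1),
        bdry 𝕜 𝕜 X (S.card - 2) w = z) :
    ∃ s ∈ K, v ∈ s ∧ ∀ i : J, ∃! u, u ∈ s ∧ c u = i := by
  obtain ⟨W, hW0, hWv, hWG⟩ := step_exists K c v (hvert v) hbase hfill (Fintype.card J)
  have hGall : ∀ S : Finset J, S.Nonempty → GoodAt K c W S := fun S hS =>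
    hWG S (le_trans (Finset.card_le_univ S) (le_of_eq Finset.card_univ)) hS
  have hmu := mu_ne_zero K hK c v hiso W hWv hGall Finset.univ (Finset.mem_univ _)
  have hne : ∃ σ ∈ (Dv 𝕜 X v (W Finset.univ)).support,
      σ.image c = Finset.univ.erase (c v) ∧ σ.card = (Finset.univ.erase (c v)).card := by
    by_contra hcon
    push_neg at hcon
    exact hmu (th_eq_zero 𝕜 c _ _ (fun σ hσ h => (hcon σ hσ h.1) h.2))
  obtain ⟨σ, hσ, himg, hcard⟩ := hne
  obtain ⟨ρ, hρ, hvρ, rfl⟩ := Dv_support v _ hσ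
  obtain ⟨hρcard, hρK, -⟩ := (hGall Finset.univ ⟨c v, Finset.mem_univ _⟩).1 ρ hρ
  refine ⟨ρ, hρK, hvρ, ?_⟩
  have hinj : Set.InjOn c ↑(ρ.erase v) := Finset.card_image_iff.1 (by rw [himg, hcard])
  intro i
  by_cases hicv : i = c v
  · subst hicv
    refine ⟨v, ⟨hvρ, rfl⟩, ?_⟩
    rintro y ⟨hyρ, hcy⟩
    by_contra hyv
    have hy' : y ∈ ρ.erase v := Finset.mem_erase.2 ⟨hyv, hyρ⟩
    have hmem : c y ∈ Finset.univ.erase (c v) := himg ▸ Finset.mem_image_of_mem c hy'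
    rw [hcy] at hmem
    exact Finset.notMem_erase _ _ hmem
  · have hi' : i ∈ (ρ.erase v).image c := by
      rw [himg]
      exact Finset.mem_erase.2 ⟨hicv, Finset.mem_univ _⟩
    rcases Finset.mem_image.1 hi' with ⟨x, hx, hcx⟩
    refine ⟨x, ⟨Finset.mem_of_mem_erase hx, hcx⟩, ?_⟩
    rintro y ⟨hyρ, hcy⟩
    have hyv : y ≠ v := fun hh => hicv (by rw [← hcy, hh])
    exact hinj (Finset.mem_erase.2 ⟨hyv, hyρ⟩) hx (by rw [hcy, hcx])

end Sec8

end SpernerAux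
/-- Sperner-type lemma with a prescribed vertex: a vertex isolated within its own colour
class lies in some rainbow simplex. -/
theorem rainbow_through_isolated_vertex {V : Type*} [LinearOrder V] (F : Type*)
    [Field F] (m : ℕ)
    (K : Set (Finset V)) (hK : IsComplex K) (hvert : ∀ v : V, {v} ∈ K)
    (c : V → Fin (m + 1))
    (v : V) (hiso : ∀ u : V, u ≠ v → c u = c v → ({v, u} : Finset V) ∉ K)
    (h : ∀ S : Finset (Fin (m + 1)), S.Nonempty →
      RedHVanish F F V {s ∈ K | ∀ w ∈ s, c w ∈ S} ((S.card : ℤ) - 2)) :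
    ∃ s ∈ K, v ∈ s ∧ ∀ i : Fin (m + 1), ∃! u, u ∈ s ∧ c u = i := by
  classical
  have hbase : ∀ i : Fin (m + 1), ∃ x : V, c x = i ∧ ({x} : Finset V) ∈ K := by
    intro i
    have hv := h {i} ⟨i, Finset.mem_singleton_self i⟩
    rw [show ((({i} : Finset (Fin (m + 1))).card : ℤ) - 2) = -1 by simp] at hv
    rw [RedHVanish, if_neg (by norm_num), if_pos rfl] at hv
    obtain ⟨τ, hτK, hτcol⟩ := hv
    obtain ⟨x, hxτ⟩ := hK.1 τ hτK
    exact ⟨x, Finset.mem_singleton.1 (hτcol x hxτ), hvert x⟩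
  have hfill : ∀ S : Finset (Fin (m + 1)), 2 ≤ S.card →
      ∀ z ∈ cyclesIn F F V {s ∈ K | ∀ w ∈ s, c w ∈ S} (S.card - 2),
      ∃ w ∈ chainsIn F F V {s ∈ K | ∀ w ∈ s, c w ∈ S} (S.card - 2 + 1),
        bdry F F V (S.card - 2) w = z := by
    intro S hS2 z hz
    have hv := h S (Finset.card_pos.1 (by omega))
    rw [RedHVanish, if_neg (by omega), if_neg (by omega)] at hv
    rw [show ((S.card : ℤ) - 2).toNat = S.card - 2 by omega] at hv
    exact SpernerAux.fill_of_subsingleton F V _ (S.card - 2) hv hz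
  exact SpernerAux.rainbow_generic K hK hvert c v hiso hbase hfill
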